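/- arXiv:0906.0546 — 2 statements merged into one kernel-verified Lean document; each statement's English description precedes it below -/
import Mathlib

section
/- Let (J1, J2, J3) be a para-hypercomplex structure on a real vector space V, V⁺ the +1-eigenspace of J2, and h a nondegenerate skew-symmetric bilinear form on V⁺. Extend h to V by declaring h(X,Y) = 0 whenever X or Y lies in V⁻, and define g(X,Y) = h(X, J1Y) + h(Y, J1X). Then g is a nondegenerate symmetric bilinear form on V satisfying g(J1X,J1Y) = g(X,Y) and g(J2X,J2Y) = g(J3X,J3Y) = -g(X,Y). -/
theorem stmt_3 (V : Type*) [AddCommGroup V] [Module ℝ V]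
    (J1 J2 J3 : V →ₗ[ℝ] V)
    (hJ1 : J1 ∘ₗ J1 = -LinearMap.id)
    (hJ2 : J2 ∘ₗ J2 = LinearMap.id)
    (hJ3 : J3 ∘ₗ J3 = LinearMap.id)
    (h12 : J1 ∘ₗ J2 = J3)
    (h21 : J2 ∘ₗ J1 = -J3)
    (Vp : Submodule ℝ V) (Vm : Submodule ℝ V)
    (hVp : Vp = LinearMap.ker (J2 - LinearMap.id))
    (hVm : Vm = LinearMap.ker (J2 + LinearMap.id))
    (h : V →ₗ[ℝ] V →ₗ[ℝ] ℝ)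
    -- h is skew-symmetric on V⁺
    (hskew : ∀ x ∈ Vp, ∀ y ∈ Vp, h x y = -h y x)
    -- h is nondegenerate on V⁺
    (hnd : ∀ x ∈ Vp, (∀ y ∈ Vp, h x y = 0) → x = 0)
    -- h vanishes whenever one argument lies in V⁻
    (hzero : ∀ x y, x ∈ Vm ∨ y ∈ Vm → h x y = 0)
    (g : V → V → ℝ)
    (hg : ∀ X Y, g X Y = h X (J1 Y) + h Y (J1 X)) :
    (∀ X Y, g X Y = g Y X) ∧
    (∀ X, (∀ Y, g X Y = 0) → X = 0) ∧
    (∀ X Y, g (J1 X) (J1 Y) = g X Y) ∧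
    (∀ X Y, g (J2 X) (J2 Y) = -g X Y) ∧
    (∀ X Y, g (J3 X) (J3 Y) = -g X Y) := by
  have memp : ∀ x, x ∈ Vp ↔ J2 x = x := by
    intro x
    rw [hVp, LinearMap.mem_ker, LinearMap.sub_apply, LinearMap.id_apply, sub_eq_zero]
  have memm : ∀ x, x ∈ Vm ↔ J2 x = -x := by
    intro x
    rw [hVm, LinearMap.mem_ker, LinearMap.add_apply, LinearMap.id_apply,
      add_eq_zero_iff_eq_neg]
  have j11 : ∀ x, J1 (J1 x) = -x := by
    intro x
    have := LinearMap.ext_iff.1 hJ1 x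
    simpa using this
  have j22 : ∀ x, J2 (J2 x) = x := by
    intro x
    have := LinearMap.ext_iff.1 hJ2 x
    simpa using this
  have j21 : ∀ x, J2 (J1 x) = -J1 (J2 x) := by
    intro x
    have h1 := LinearMap.ext_iff.1 h21 x
    have h2 := LinearMap.ext_iff.1 h12 x
    simp only [LinearMap.comp_apply, LinearMap.neg_apply] at h1 h2
    rw [h1, ← h2]
  have j3eq : ∀ x, J3 x = J1 (J2 x) := by
    intro x
    have h2 := LinearMap.ext_iff.1 h12 x
    simp only [LinearMap.comp_apply] at h2
    exact h2.symm
  set p : V → V := fun x => (1/2 : ℝ) • (x + J2 x) with hpdef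
  set m : V → V := fun x => (1/2 : ℝ) • (x - J2 x) with hmdef
  have hpm : ∀ x, p x + m x = x := by
    intro x
    simp only [hpdef, hmdef]
    rw [← smul_add]
    have : x + J2 x + (x - J2 x) = (2:ℝ) • x := by
      rw [two_smul]; abel
    rw [this, smul_smul]; norm_num
  have hpP : ∀ x, p x ∈ Vp := by
    intro x
    rw [memp]
    simp only [hpdef, map_smul, map_add, j22]
    rw [add_comm]
  have hmM : ∀ x, m x ∈ Vm := by
    intro x
    rw [memm]
    simp only [hmdef, map_smul, map_sub, j22]
    rw [← smul_neg]
    congr 1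
    abel
  have pJ1 : ∀ x, p (J1 x) = J1 (m x) := by
    intro x
    simp only [hpdef, hmdef, map_smul, map_sub]
    rw [j21]
    congr 1
    abel
  have mJ1 : ∀ x, m (J1 x) = J1 (p x) := by
    intro x
    simp only [hpdef, hmdef, map_smul, map_add]
    rw [j21]
    congr 1
    abel
  have pJ2 : ∀ x, p (J2 x) = p x := by
    intro x
    simp only [hpdef, map_add, j22]  -- p (J2 x) = (1/2)•(J2 x + x)
    rw [add_comm]
  have mJ2 : ∀ x, m (J2 x) = -(m x) := by
    intro x
    simp only [hmdef, j22]
    rw [← smul_neg]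
    congr 1
    abel
  have J1mP : ∀ x, J1 (m x) ∈ Vp := by
    intro x
    rw [memp, j21]
    have := (memm _).1 (hmM x)
    rw [this, map_neg, neg_neg]
  -- h only sees Vp components
  have hpp : ∀ X Y, h X Y = h (p X) (p Y) := by
    intro X Y
    conv_lhs => rw [← hpm X, ← hpm Y]
    simp only [map_add, LinearMap.add_apply]
    rw [hzero (m X) (p Y) (Or.inl (hmM X)), hzero (m X) (m Y) (Or.inl (hmM X)),
      hzero (p X) (m Y) (Or.inr (hmM Y))]
    ring
  -- normal form of g
  have G : ∀ X Y, g X Y = h (p X) (J1 (m Y)) + h (p Y) (J1 (m X)) := by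
    intro X Y
    rw [hg, hpp X (J1 Y), hpp Y (J1 X), pJ1, pJ1]
  have hsym : ∀ X Y, g X Y = g Y X := by
    intro X Y
    rw [hg, hg]; ring
  have hJ1inv : ∀ X Y, g (J1 X) (J1 Y) = g X Y := by
    intro X Y
    rw [G, G, pJ1, pJ1, mJ1, mJ1, j11, j11]
    rw [map_neg, map_neg]
    rw [hskew _ (J1mP X) _ (hpP Y), hskew _ (J1mP Y) _ (hpP X)]
    ring
  have hJ2anti : ∀ X Y, g (J2 X) (J2 Y) = -g X Y := by
    intro X Y
    rw [G, G, pJ2, pJ2, mJ2, mJ2, map_neg, map_neg, map_neg, map_neg]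
    ring
  refine ⟨hsym, ?_, hJ1inv, hJ2anti, ?_⟩
  · intro X hX
    have hmX : m X = 0 := by
      have hk : J1 (m X) = 0 := by
        apply hnd _ (J1mP X)
        intro y hy
        have hx := hX y
        rw [G] at hx
        have hpy : p y = y := by
          have := (memp y).1 hy
          simp only [hpdef, this]
          rw [← two_smul ℝ y, smul_smul]; norm_num
        have hmy : m y = 0 := by
          have := (memp y).1 hy
          simp only [hmdef, this, sub_self, smul_zero]
        rw [hpy, hmy] at hx
        simp only [map_zero, LinearMap.zero_apply, zero_add] at hx
        rw [hskew _ (J1mP X) _ hy]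
        linarith
      have := congrArg J1 hk
      rw [j11, map_zero, neg_eq_zero] at this
      exact this
    have hpX : p X = 0 := by
      apply hnd _ (hpP X)
      intro y hy
      have hYm : J1 y ∈ Vm := by
        rw [memm, j21, (memp y).1 hy]
      have hx := hX (-(J1 y))
      rw [G] at hx
      have hmJ : m (-(J1 y)) = -(J1 y) := by
        have hJ := (memm _).1 hYm
        simp only [hmdef, map_neg, hJ, neg_neg]
        module
      have hpJ : p (-(J1 y)) = 0 := by
        have hJ := (memm _).1 hYm
        simp only [hpdef, map_neg, hJ, neg_neg]
        rw [neg_add_cancel, smul_zero]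
      rw [hmJ, hpJ, hmX] at hx
      simp only [map_neg, j11, neg_neg, map_zero, LinearMap.zero_apply, add_zero] at hx
      linarith
    rw [← hpm X, hpX, hmX, add_zero]
  · intro X Y
    rw [j3eq, j3eq, hJ1inv, hJ2anti]
end

section
/- Let (J1, J2, J3) be a para-hypercomplex structure on a 4-dimensional real vector space V and let g, h be two compatible metrics. Then there exists a nonzero real number λ such that g = λ·h. -/
theorem stmt_9 (V : Type*) [AddCommGroup V] [Module ℝ V]
    [FiniteDimensional ℝ V] (hdim : Module.finrank ℝ V = 4)
    (J1 J2 J3 : V →ₗ[ℝ] V)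
    (hJ1 : J1 ∘ₗ J1 = -LinearMap.id)
    (hJ2 : J2 ∘ₗ J2 = LinearMap.id)
    (hJ3 : J3 ∘ₗ J3 = LinearMap.id)
    (h12 : J1 ∘ₗ J2 = J3)
    (h21 : J2 ∘ₗ J1 = -J3)
    (g h : V →ₗ[ℝ] V →ₗ[ℝ] ℝ)
    (gsymm : ∀ x y, g x y = g y x)
    (gnd : ∀ x, (∀ y, g x y = 0) → x = 0)
    (gJ1 : ∀ x y, g (J1 x) (J1 y) = g x y)
    (gJ2 : ∀ x y, g (J2 x) (J2 y) = -g x y)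
    (gJ3 : ∀ x y, g (J3 x) (J3 y) = -g x y)
    (hsymm : ∀ x y, h x y = h y x)
    (hnd : ∀ x, (∀ y, h x y = 0) → x = 0)
    (hJ1' : ∀ x y, h (J1 x) (J1 y) = h x y)
    (hJ2' : ∀ x y, h (J2 x) (J2 y) = -h x y)
    (hJ3' : ∀ x y, h (J3 x) (J3 y) = -h x y)
    :
    ∃ lam : ℝ, lam ≠ 0 ∧ ∀ X Y, g X Y = lam * h X Y := by
  -- pointwise operator identities
  have e1 : ∀ x, J1 (J1 x) = -x := fun x => by
    have := congrArg (fun f : V →ₗ[ℝ] V => f x) hJ1; simpa using this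
  have e2 : ∀ x, J2 (J2 x) = x := fun x => by
    have := congrArg (fun f : V →ₗ[ℝ] V => f x) hJ2; simpa using this
  have e12 : ∀ x, J1 (J2 x) = J3 x := fun x => by
    have := congrArg (fun f : V →ₗ[ℝ] V => f x) h12; simpa using this
  have e21 : ∀ x, J2 (J1 x) = -(J3 x) := fun x => by
    have := congrArg (fun f : V →ₗ[ℝ] V => f x) h21; simpa using this
  have e13 : ∀ x, J1 (J3 x) = -(J2 x) := fun x => by
    rw [← e12 x, e1]
  have e23 : ∀ x, J2 (J3 x) = -(J1 x) := fun x => by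
    rw [← e12 x, e21, ← e12 (J2 x), e2]
  -- orthogonality relations for any compatible symmetric form
  have key : ∀ (b : V →ₗ[ℝ] V →ₗ[ℝ] ℝ), (∀ x y, b x y = b y x) →
      (∀ x y, b (J1 x) (J1 y) = b x y) → (∀ x y, b (J2 x) (J2 y) = -b x y) →
      ∀ x, b x (J1 x) = 0 ∧ b x (J2 x) = 0 ∧ b x (J3 x) = 0 ∧
        b (J1 x) (J2 x) = 0 ∧ b (J1 x) (J3 x) = 0 ∧ b (J2 x) (J3 x) = 0 := by
    intro b bs b1 b2 x
    have o1 : b x (J1 x) = 0 := by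
      have := b1 x (J1 x)
      rw [e1] at this
      simp only [map_neg] at this
      have hs := bs x (J1 x)
      linarith
    have o2 : b x (J2 x) = 0 := by
      have := b2 x (J2 x)
      rw [e2] at this
      have hs := bs x (J2 x)
      linarith
    have o14 : b (J1 x) (J2 x) = -b x (J3 x) := by
      have := b1 (J1 x) (J2 x)
      rw [e1, e12] at this
      simp only [map_neg, LinearMap.neg_apply] at this
      linarith
    have o15 : b (J1 x) (J2 x) = b x (J3 x) := by
      have := b2 (J1 x) (J2 x)
      rw [e21, e2] at this
      simp only [map_neg, LinearMap.neg_apply] at this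
      have hs := bs (J3 x) x
      linarith
    have o3 : b x (J3 x) = 0 := by linarith
    have o4 : b (J1 x) (J2 x) = 0 := by linarith
    have o5 : b (J1 x) (J3 x) = 0 := by
      have := b1 (J1 x) (J3 x)
      rw [e1, e13] at this
      simp only [map_neg, LinearMap.neg_apply] at this
      linarith
    have o6 : b (J2 x) (J3 x) = 0 := by
      have := b2 (J2 x) (J3 x)
      rw [e2, e23] at this
      simp only [map_neg, LinearMap.neg_apply] at this
      linarith
    exact ⟨o1, o2, o3, o4, o5, o6⟩
  -- existence of a g-anisotropic vector
  have hx0 : ∃ x : V, g x x ≠ 0 := by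
    by_contra hc
    push_neg at hc
    have hall : ∀ x y : V, g x y = 0 := by
      intro x y
      have h1 := hc (x + y)
      have h2 := hc x
      have h3 := hc y
      have hsum : g (x + y) (x + y) = g x x + g x y + g y x + g y y := by
        simp [map_add]; ring
      have hs := gsymm x y
      rw [hsum] at h1
      linarith
    have hz : ∀ x : V, x = 0 := fun x => gnd x (fun y => hall x y)
    have : Subsingleton V := ⟨fun a b => by rw [hz a, hz b]⟩
    have := Module.finrank_zero_of_subsingleton (R := ℝ) (M := V)
    omega
  obtain ⟨x0, ha⟩ := hx0
  obtain ⟨g1, g2, g3, g4, g5, g6⟩ := key g gsymm gJ1 gJ2 x0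
  obtain ⟨k1, k2, k3, k4, k5, k6⟩ := key h hsymm hJ1' hJ2' x0
  set a := g x0 x0 with ha_def
  set m := h x0 x0 with hm_def
  -- the family
  set v : Fin 4 → V := ![x0, J1 x0, J2 x0, J3 x0] with hv
  -- diagonal values
  have gd1 : g (J1 x0) (J1 x0) = a := gJ1 x0 x0
  have gd2 : g (J2 x0) (J2 x0) = -a := gJ2 x0 x0
  have gd3 : g (J3 x0) (J3 x0) = -a := gJ3 x0 x0
  have hd1 : h (J1 x0) (J1 x0) = m := hJ1' x0 x0
  have hd2 : h (J2 x0) (J2 x0) = -m := hJ2' x0 x0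
  have hd3 : h (J3 x0) (J3 x0) = -m := hJ3' x0 x0
  -- linear independence
  have hli : LinearIndependent ℝ v := by
    rw [Fintype.linearIndependent_iff]
    intro c hc
    have hg : ∀ j : Fin 4, g (v j) (∑ i, c i • v i) = 0 := by
      intro j; rw [hc]; simp
    have hv0 : v 0 = x0 := rfl
    have hv1 : v 1 = J1 x0 := rfl
    have hv2 : v 2 = J2 x0 := rfl
    have hv3 : v 3 = J3 x0 := rfl
    have expand : ∀ j : Fin 4,
        c 0 * g (v j) (v 0) + c 1 * g (v j) (v 1) + c 2 * g (v j) (v 2)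
          + c 3 * g (v j) (v 3) = 0 := by
      intro j
      have := hg j
      rw [Fin.sum_univ_four] at this
      simp only [map_add, map_smul, smul_eq_mul] at this
      linarith
    have E0 := expand 0
    have E1 := expand 1
    have E2 := expand 2
    have E3 := expand 3
    rw [hv0, hv1, hv2, hv3, g1, g2, g3] at E0
    rw [hv0, hv1, hv2, hv3, gsymm (J1 x0) x0, g1, gd1, g4, g5] at E1
    rw [hv0, hv1, hv2, hv3, gsymm (J2 x0) x0, g2, gsymm (J2 x0) (J1 x0), g4, gd2, g6] at E2
    rw [hv0, hv1, hv2, hv3, gsymm (J3 x0) x0, g3, gsymm (J3 x0) (J1 x0), g5,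
      gsymm (J3 x0) (J2 x0), g6, gd3] at E3
    have hc0 : c 0 * a = 0 := by linarith
    have hc1 : c 1 * a = 0 := by linarith
    have hc2 : c 2 * a = 0 := by linarith
    have hc3 : c 3 * a = 0 := by linarith
    intro i
    fin_cases i
    · exact (mul_eq_zero.mp hc0).resolve_right ha
    · exact (mul_eq_zero.mp hc1).resolve_right ha
    · exact (mul_eq_zero.mp hc2).resolve_right ha
    · exact (mul_eq_zero.mp hc3).resolve_right ha
  have hcard : Fintype.card (Fin 4) = Module.finrank ℝ V := by simp [hdim]
  let bb : Module.Basis (Fin 4) ℝ V := basisOfLinearIndependentOfCardEqFinrank hli hcard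
  have hbb : ∀ i, bb i = v i := fun i => by
    simp [bb, coe_basisOfLinearIndependentOfCardEqFinrank]
  -- h x0 x0 ≠ 0
  have hm : m ≠ 0 := by
    intro hm0
    have hx0z : x0 = 0 := by
      apply hnd
      have hcomp : h x0 = 0 := by
        apply bb.ext
        intro i
        rw [hbb i]
        fin_cases i
        · show h x0 x0 = 0; rw [← hm_def]; exact hm0
        · show h x0 (J1 x0) = 0; exact k1
        · show h x0 (J2 x0) = 0; exact k2
        · show h x0 (J3 x0) = 0; exact k3
      intro y
      rw [hcomp]; rfl
    rw [ha_def, hx0z] at ha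
    simp at ha
  refine ⟨a / m, div_ne_zero ha hm, ?_⟩
  have main : g = (a / m) • h := by
    apply bb.ext
    intro i
    apply bb.ext
    intro j
    rw [hbb i, hbb j]
    fin_cases i <;> fin_cases j
    · show g x0 x0 = (a / m) * h x0 x0
      rw [← ha_def, ← hm_def]; field_simp
    · show g x0 (J1 x0) = (a / m) * h x0 (J1 x0)
      rw [g1, k1]; ring
    · show g x0 (J2 x0) = (a / m) * h x0 (J2 x0)
      rw [g2, k2]; ring
    · show g x0 (J3 x0) = (a / m) * h x0 (J3 x0)
      rw [g3, k3]; ring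
    · show g (J1 x0) x0 = (a / m) * h (J1 x0) x0
      rw [gsymm (J1 x0) x0, g1, hsymm (J1 x0) x0, k1]; ring
    · show g (J1 x0) (J1 x0) = (a / m) * h (J1 x0) (J1 x0)
      rw [gd1, hd1]; field_simp
    · show g (J1 x0) (J2 x0) = (a / m) * h (J1 x0) (J2 x0)
      rw [g4, k4]; ring
    · show g (J1 x0) (J3 x0) = (a / m) * h (J1 x0) (J3 x0)
      rw [g5, k5]; ring
    · show g (J2 x0) x0 = (a / m) * h (J2 x0) x0
      rw [gsymm (J2 x0) x0, g2, hsymm (J2 x0) x0, k2]; ring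
    · show g (J2 x0) (J1 x0) = (a / m) * h (J2 x0) (J1 x0)
      rw [gsymm (J2 x0) (J1 x0), g4, hsymm (J2 x0) (J1 x0), k4]; ring
    · show g (J2 x0) (J2 x0) = (a / m) * h (J2 x0) (J2 x0)
      rw [gd2, hd2]; field_simp
    · show g (J2 x0) (J3 x0) = (a / m) * h (J2 x0) (J3 x0)
      rw [g6, k6]; ring
    · show g (J3 x0) x0 = (a / m) * h (J3 x0) x0
      rw [gsymm (J3 x0) x0, g3, hsymm (J3 x0) x0, k3]; ring
    · show g (J3 x0) (J1 x0) = (a / m) * h (J3 x0) (J1 x0)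
      rw [gsymm (J3 x0) (J1 x0), g5, hsymm (J3 x0) (J1 x0), k5]; ring
    · show g (J3 x0) (J2 x0) = (a / m) * h (J3 x0) (J2 x0)
      rw [gsymm (J3 x0) (J2 x0), g6, hsymm (J3 x0) (J2 x0), k6]; ring
    · show g (J3 x0) (J3 x0) = (a / m) * h (J3 x0) (J3 x0)
      rw [gd3, hd3]; field_simp
  intro X Y
  rw [main]
  rfl
end
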